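/- Let G be a group, H and L groups, and consider the iterated wreath product (G ≀ H) ≀ L. Then (G ≀ H) ≀ L is isomorphic to G^{H × L} ⋊ (H ≀ L) for a suitable action of H ≀ L on G^{H × L}. -/

import Mathlib

/-- The action of `H` on `H → G` permuting the coordinates by left translation. -/
def wreathAct (G H : Type*) [Group G] [Group H] : H →* MulAut (H → G) where
  toFun h :=
    { toFun := fun f x => f (h⁻¹ * x)
      invFun := fun f x => f (h * x)
      left_inv := fun f => funext fun x => by simp
      right_inv := fun f => funext fun x => by simp
      map_mul' := fun f g => rfl }
  map_one' := by ext f x; simp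
  map_mul' := fun a b => by ext f x; simp [mul_assoc]

/-- The (regular, unrestricted) wreath product `G ≀ H = G^H ⋊ H`. -/
abbrev Wreath (G H : Type*) [Group G] [Group H] : Type _ :=
  (H → G) ⋊[wreathAct G H] H

/-- The action of `H ≀ L` on `G^{H × L}`. -/
def iterAct (G H L : Type*) [Group G] [Group H] [Group L] :
    Wreath H L →* MulAut (H × L → G) where
  toFun w :=
    { toFun := fun g p => g ((w.left p.2)⁻¹ * p.1, w.right⁻¹ * p.2)
      invFun := fun g p => g (w.left (w.right * p.2) * p.1, w.right * p.2)
      left_inv := fun g => funext fun p => by simp [mul_assoc]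
      right_inv := fun g => funext fun p => by simp [← mul_assoc]
      map_mul' := fun f g => rfl }
  map_one' := by ext g p; simp
  map_mul' := fun a b => by
    ext g p
    simp [wreathAct, mul_assoc, mul_inv_rev]

/-- `(G ≀ H) ≀ L` is isomorphic to `G^{H × L} ⋊ (H ≀ L)` for a suitable
action of `H ≀ L` on `G^{H × L}`. -/
theorem iterated_wreath_iso
    (G H L : Type*) [Group G] [Group H] [Group L] :
    ∃ act : Wreath H L →* MulAut (H × L → G),
      Nonempty (Wreath (Wreath G H) L ≃* (H × L → G) ⋊[act] Wreath H L) := by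
  refine ⟨iterAct G H L, ⟨{
    toFun := fun w => ⟨fun p => (w.left p.2).left p.1,
      ⟨fun l' => (w.left l').right, w.right⟩⟩
    invFun := fun v => ⟨fun l' => ⟨fun h => v.left (h, l'), v.right.left l'⟩, v.right.right⟩
    left_inv := fun w => by ext <;> simp
    right_inv := fun v => by ext <;> simp
    map_mul' := fun a b => by
      ext p <;> simp only [SemidirectProduct.mul_left, SemidirectProduct.mul_right] <;> simp [iterAct, wreathAct, mul_assoc]
  }⟩⟩
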